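/- Define the operator D on functions f : ℂ → ℂ by (D f)(w) = w · f′(w), and define A(·; m) : ℂ → ℂ by A(w; m) = (Dᵐ f)(w) where f(w) = 1/(1 − w − w²). Then for every nonnegative integer m and every w ∈ ℂ with 1 − w − w² ≠ 0, (1 − w − w²) · A(w; m) = δ_{m,0} + w · ∑_{j=0}^{m−1} C(m, j) · (2^{m−j}·w + 1) · A(w; j), where δ is the Kronecker delta and C(m, j) denotes the binomial coefficient. -/

import Mathlib

/-- The operator `D` acting on functions `f : ℂ → ℂ` by `(D f)(w) = w * f'(w)`. -/
noncomputable def Dop (f : ℂ → ℂ) : ℂ → ℂ := fun w => w * deriv f w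

/-- `A w m = (Dᵐ f)(w)` where `f w = 1 / (1 - w - w²)`. -/
noncomputable def A (w : ℂ) (m : ℕ) : ℂ :=
  (Dop^[m] (fun z => 1 / (1 - z - z ^ 2))) w

open Finset

/-- The coefficient functions: `G 0 w = 1 - w - w²`, `G (k+1) w = -(w + 2^(k+1) w²)`. -/
noncomputable def G : ℕ → ℂ → ℂ
  | 0 => fun w => 1 - w - w ^ 2
  | (k+1) => fun w => -(w + 2 ^ (k+1) * w ^ 2)

lemma hasDerivAt_G (k : ℕ) (w : ℂ) :
    HasDerivAt (G k) (match k with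
      | 0 => -1 - 2 * w
      | (k+1) => -(1 + 2 ^ (k+1) * (2 * w))) w := by
  cases k with
  | zero =>
      have h := ((hasDerivAt_const w (1:ℂ)).fun_sub (hasDerivAt_id' (x := w))).fun_sub (hasDerivAt_pow 2 w)
      simpa [G] using h
  | succ k =>
      have h := ((hasDerivAt_id' (x := w)).fun_add (((hasDerivAt_pow 2 w)).const_mul ((2:ℂ) ^ (k+1)))).fun_neg
      simpa [G, mul_comm, mul_assoc, mul_left_comm] using h

lemma Dop_G (k : ℕ) : Dop (G k) = G (k+1) := by
  funext w
  have h := hasDerivAt_G k w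
  cases k with
  | zero => rw [Dop, h.deriv]; show _ = -(w + 2^(0+1) * w^2); ring
  | succ k => rw [Dop, h.deriv]; show _ = -(w + 2^(k+2) * w^2); ring

def U : Set ℂ := {w | 1 - w - w ^ 2 ≠ 0}

lemma U_open : IsOpen U :=
  isOpen_ne.preimage (by continuity : Continuous fun w : ℂ => 1 - w - w ^ 2)

lemma A_analytic (m : ℕ) : AnalyticOnNhd ℂ (fun w => A w m) U := by
  induction m with
  | zero =>
      simp only [A, Function.iterate_zero, id]
      exact analyticOnNhd_const.div
        ((analyticOnNhd_const.sub analyticOnNhd_id).sub (analyticOnNhd_id.pow 2))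
        (fun w hw => hw)
  | succ m ih =>
      have : (fun w => A w (m+1)) = Dop (fun w => A w m) := by
        funext w
        simp only [A, Function.iterate_succ_apply', Dop]
      rw [this]
      exact analyticOnNhd_id.mul ih.deriv

lemma A_succ (w : ℂ) (j : ℕ) : A w (j+1) = w * deriv (fun z => A z j) w := by
  simp only [A, Function.iterate_succ_apply', Dop]

lemma key (m : ℕ) : ∀ w ∈ U, ∑ j ∈ range (m+1), (m.choose j : ℂ) * G (m-j) w * A w j
    = if m = 0 then 1 else 0 := by
  induction m with
  | zero =>
      intro w hw
      rw [Finset.range_one, Finset.sum_singleton, if_pos rfl]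
      have hA0 : A w 0 = 1 / (1 - w - w ^ 2) := rfl
      have hG0 : G (0 - 0) w = 1 - w - w ^ 2 := rfl
      rw [hA0, hG0, Nat.choose_self]
      push_cast
      rw [one_mul, mul_one_div]
      exact div_self hw
  | succ m ih =>
      intro w hw
      -- the sum function
      set S : ℂ → ℂ := fun z => ∑ j ∈ range (m+1), (m.choose j : ℂ) * G (m-j) z * A z j with hS
      -- derivative of each summand
      have hterm : ∀ j ∈ range (m+1), HasDerivAt
          (fun z => (m.choose j : ℂ) * G (m-j) z * A z j)
          ((m.choose j : ℂ) * deriv (G (m-j)) w * A w j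
            + ((m.choose j : ℂ) * G (m-j) w) * deriv (fun z => A z j) w) w := by
        intro j hj
        have hG : HasDerivAt (G (m-j)) (deriv (G (m-j)) w) w :=
          (hasDerivAt_G (m-j) w).differentiableAt.hasDerivAt
        have hA : HasDerivAt (fun z => A z j) (deriv (fun z => A z j) w) w :=
          ((A_analytic j w hw).differentiableAt).hasDerivAt
        exact (hG.const_mul _).mul hA
      have hSd : HasDerivAt S (∑ j ∈ range (m+1),
          ((m.choose j : ℂ) * deriv (G (m-j)) w * A w j
            + ((m.choose j : ℂ) * G (m-j) w) * deriv (fun z => A z j) w)) w :=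
        HasDerivAt.fun_sum hterm
      -- S is locally constant near w
      have hEq : S =ᶠ[nhds w] fun _ => (if m = 0 then (1:ℂ) else 0) :=
        Filter.eventuallyEq_of_mem (U_open.mem_nhds hw) ih
      have hderiv0 : deriv S w = 0 := by rw [hEq.deriv_eq, deriv_const]
      have hsum0 : (∑ j ∈ range (m+1),
          ((m.choose j : ℂ) * deriv (G (m-j)) w * A w j
            + ((m.choose j : ℂ) * G (m-j) w) * deriv (fun z => A z j) w)) = 0 := by
        rw [← hSd.deriv]; exact hderiv0
      -- multiply by w and rewrite
      have hD : ∑ j ∈ range (m+1), ((m.choose j : ℂ) * G (m+1-j) w * A w j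
          + (m.choose j : ℂ) * G (m-j) w * A w (j+1)) = 0 := by
        have := congrArg (fun x => w * x) hsum0
        simp only [mul_zero] at this
        rw [← this, Finset.mul_sum]
        refine Finset.sum_congr rfl fun j hj => ?_
        have hjm : j ≤ m := Nat.lt_succ_iff.mp (mem_range.mp hj)
        have h1 : G (m+1-j) w = w * deriv (G (m-j)) w := by
          have := congrFun (Dop_G (m-j)) w
          rw [Dop] at this
          have hidx : m + 1 - j = m - j + 1 := Nat.succ_sub hjm
          rw [hidx]
          exact this.symm
        have h2 : A w (j+1) = w * deriv (fun z => A z j) w := A_succ w j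
        rw [h1, h2]; ring
      -- now assemble
      rw [if_neg (Nat.succ_ne_zero m)]
      -- split the big sum
      rw [Finset.sum_range_succ']
      have hch : ∀ i, ((m+1).choose (i+1) : ℂ) = (m.choose i : ℂ) + (m.choose (i+1) : ℂ) := by
        intro i; rw [Nat.choose_succ_succ]; push_cast; ring
      have hsplit : ∑ i ∈ range (m+1), ((m+1).choose (i+1) : ℂ) * G (m+1-(i+1)) w * A w (i+1)
          = ∑ i ∈ range (m+1), ((m.choose i : ℂ) * G (m-i) w * A w (i+1))
            + ∑ i ∈ range (m+1), ((m.choose (i+1) : ℂ) * G (m-i) w * A w (i+1)) := by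
        rw [← Finset.sum_add_distrib]
        refine Finset.sum_congr rfl fun i hi => ?_
        rw [hch i]
        have : m + 1 - (i+1) = m - i := by omega
        rw [this]; ring
      rw [hsplit]
      -- second piece: extend/truncate
      have htrunc : ∑ i ∈ range (m+1), ((m.choose (i+1) : ℂ) * G (m-i) w * A w (i+1))
          = ∑ i ∈ range m, ((m.choose (i+1) : ℂ) * G (m-i) w * A w (i+1)) := by
        rw [Finset.sum_range_succ]
        simp [Nat.choose_succ_self]
      rw [htrunc]
      -- first sum of hD, peeled
      have hfirst : ∑ j ∈ range (m+1), (m.choose j : ℂ) * G (m+1-j) w * A w j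
          = ∑ i ∈ range m, ((m.choose (i+1) : ℂ) * G (m-i) w * A w (i+1))
            + (m.choose 0 : ℂ) * G (m+1) w * A w 0 := by
        rw [Finset.sum_range_succ']
        congr 1
        refine Finset.sum_congr rfl fun i hi => ?_
        have : m + 1 - (i+1) = m - i := by omega
        rw [this]
      -- combine
      have hD' := hD
      rw [Finset.sum_add_distrib, hfirst] at hD'
      simp only [Nat.choose_zero_right, Nat.cast_one, one_mul, Nat.sub_zero] at hD' ⊢
      linear_combination hD'

theorem A_recurrence (m : ℕ) (w : ℂ) (hw : 1 - w - w ^ 2 ≠ 0) :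
    (1 - w - w ^ 2) * A w m =
      (if m = 0 then 1 else 0) +
        w * ∑ j ∈ Finset.range m,
          (m.choose j : ℂ) * (2 ^ (m - j) * w + 1) * A w j := by
  have hk := key m w hw
  rw [Finset.sum_range_succ, Nat.choose_self, Nat.sub_self, Nat.cast_one, one_mul] at hk
  have hG0 : G 0 w = 1 - w - w ^ 2 := rfl
  rw [hG0] at hk
  have hsum : w * ∑ j ∈ Finset.range m, (m.choose j : ℂ) * (2 ^ (m - j) * w + 1) * A w j
      = - ∑ j ∈ Finset.range m, (m.choose j : ℂ) * G (m - j) w * A w j := by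
    rw [Finset.mul_sum, ← Finset.sum_neg_distrib]
    refine Finset.sum_congr rfl fun j hj => ?_
    have hjm : j < m := Finset.mem_range.mp hj
    obtain ⟨k, hk2⟩ : ∃ k, m - j = k + 1 := ⟨m - j - 1, by omega⟩
    have hGk : G (m - j) w = -(w + 2 ^ (m - j) * w ^ 2) := by rw [hk2]; rfl
    rw [hGk]; ring
  rw [hsum]
  linear_combination hk
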